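/- Let k ≥ 2, (r₀,s₀),…,(r_k,s_k) ∈ ℝ², and set γᵢ := rᵢ + sᵢ for i ∈ {0,…,k}. Suppose that either all γ₀,…,γ_k ≥ 0 with at most one equal to zero, or there exists i ∈ {0,…,k} such that γᵢ < 0, γⱼ > 0 for all j ≠ i, and 1/γ₀ + 1/γ₁ + ⋯ + 1/γ_k < 0. Then for all y ∈ ℝ₊^k the k×k matrix with entries (1/(yᵢyⱼ))·(∏_{ℓ=1}^k y_ℓ)·(δ_{ij}γⱼ + γ₀) is positive definite. -/

import Mathlib

open Finset

lemma key_pos (k : ℕ) (γ : Fin (k + 1) → ℝ)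
    (h : ((∀ i, 0 ≤ γ i) ∧ ∀ i j, γ i = 0 → γ j = 0 → i = j) ∨
      ∃ i, γ i < 0 ∧ (∀ j, j ≠ i → 0 < γ j) ∧ ∑ j, (γ j)⁻¹ < 0)
    (v : Fin k → ℝ) (hv : v ≠ 0) :
    0 < (∑ i, γ i.succ * v i ^ 2) + γ 0 * (∑ i, v i) ^ 2 := by
  obtain ⟨i0, hi0⟩ := Function.ne_iff.mp hv
  simp only [Pi.zero_apply] at hi0
  rcases h with ⟨h1, h2⟩ | ⟨i, hneg, hpos, hsum⟩
  · -- Case 1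
    by_cases hz : γ i0.succ = 0
    · have hγ0 : 0 < γ 0 := by
        rcases lt_or_eq_of_le (h1 0) with h' | h'
        · exact h'
        · exact absurd (h2 _ _ hz h'.symm) (Fin.succ_ne_zero i0)
      by_cases hvj : ∃ j, j ≠ i0 ∧ v j ≠ 0
      · obtain ⟨j, hji, hvj⟩ := hvj
        have hgj : 0 < γ j.succ := by
          rcases lt_or_eq_of_le (h1 j.succ) with h' | h'
          · exact h'
          · exact absurd (Fin.succ_injective _ (h2 _ _ h'.symm hz)) hji
        have : 0 < ∑ i, γ i.succ * v i ^ 2 := by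
          apply Finset.sum_pos'
          · intro m _; exact mul_nonneg (h1 _) (sq_nonneg _)
          · exact ⟨j, mem_univ _, mul_pos hgj (pow_two_pos_of_ne_zero hvj)⟩
        have h2' : 0 ≤ γ 0 * (∑ i, v i) ^ 2 := mul_nonneg (h1 0) (sq_nonneg _)
        linarith
      · push_neg at hvj
        have hs : ∑ i, v i = v i0 := by
          rw [← Finset.sum_subset (Finset.subset_univ {i0})]
          · simp
          · intro x _ hx; exact hvj x (by simpa using hx)
        have h2' : 0 < γ 0 * (∑ i, v i) ^ 2 := by
          rw [hs]; positivity
        have h1' : 0 ≤ ∑ i, γ i.succ * v i ^ 2 :=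
          Finset.sum_nonneg fun m _ => mul_nonneg (h1 _) (sq_nonneg _)
        linarith
    · have hgj : 0 < γ i0.succ := lt_of_le_of_ne (h1 _) (Ne.symm hz)
      have : 0 < ∑ i, γ i.succ * v i ^ 2 := by
        apply Finset.sum_pos'
        · intro m _; exact mul_nonneg (h1 _) (sq_nonneg _)
        · exact ⟨i0, mem_univ _, mul_pos hgj (pow_two_pos_of_ne_zero hi0)⟩
      have h2' : 0 ≤ γ 0 * (∑ i, v i) ^ 2 := mul_nonneg (h1 0) (sq_nonneg _)
      linarith
  · -- Case 2
    set w : Fin (k + 1) → ℝ := Fin.cases (∑ j, v j) v with hw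
    have hw0 : w 0 = ∑ j, v j := rfl
    have hws : ∀ j : Fin k, w j.succ = v j := fun j => rfl
    set c : Fin (k + 1) → ℝ := fun m => if m = 0 then 1 else -1 with hc
    have hc2 : ∀ m, c m ^ 2 = 1 := by
      intro m; simp only [hc]; split <;> norm_num
    have hcw : ∑ m, c m * w m = 0 := by
      rw [Fin.sum_univ_succ]
      simp [hc, hw0, hws, Fin.succ_ne_zero]
    set s : Finset (Fin (k + 1)) := Finset.univ.erase i with hsdef
    have hgs : ∀ m ∈ s, 0 < γ m := fun m hm => hpos m (Finset.ne_of_mem_erase hm)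
    have hwi : (∑ m ∈ s, c m * w m) = -(c i * w i) := by
      have h0 : c i * w i + ∑ m ∈ s, c m * w m = 0 := by
        rw [hsdef]
        simpa using (Finset.add_sum_erase Finset.univ (fun m => c m * w m) (mem_univ i)).trans hcw
      linarith
    set S : ℝ := ∑ m ∈ s, (γ m)⁻¹ with hS
    set T : ℝ := ∑ m ∈ s, γ m * w m ^ 2 with hT
    -- Cauchy-Schwarz
    have hCS : w i ^ 2 ≤ S * T := by
      have := Finset.sum_mul_sq_le_sq_mul_sq s (fun m => c m / Real.sqrt (γ m))
        (fun m => Real.sqrt (γ m) * w m)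
      have e1 : ∀ m ∈ s, c m / Real.sqrt (γ m) * (Real.sqrt (γ m) * w m) = c m * w m := by
        intro m hm
        have hne : Real.sqrt (γ m) ≠ 0 := ne_of_gt (Real.sqrt_pos.mpr (hgs m hm))
        field_simp
      have e2 : ∀ m ∈ s, (c m / Real.sqrt (γ m)) ^ 2 = (γ m)⁻¹ := by
        intro m hm
        rw [div_pow, hc2, Real.sq_sqrt (le_of_lt (hgs m hm))]
        exact one_div _
      have e3 : ∀ m ∈ s, (Real.sqrt (γ m) * w m) ^ 2 = γ m * w m ^ 2 := by
        intro m hm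
        rw [mul_pow, Real.sq_sqrt (le_of_lt (hgs m hm))]
      rw [Finset.sum_congr rfl e1, Finset.sum_congr rfl e2, Finset.sum_congr rfl e3] at this
      calc w i ^ 2 = (c i * w i) ^ 2 := by rw [mul_pow, hc2, one_mul]
        _ = (∑ m ∈ s, c m * w m) ^ 2 := by rw [hwi]; ring
        _ ≤ S * T := this
    have hcoef : -1 < γ i * S := by
      have hsum' : (γ i)⁻¹ + S = ∑ j, (γ j)⁻¹ := by
        rw [hS, hsdef]; exact Finset.add_sum_erase Finset.univ (fun m => (γ m)⁻¹) (mem_univ i)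
      have hSlt : S < -(γ i)⁻¹ := by linarith
      have := mul_lt_mul_of_neg_left hSlt hneg
      rw [mul_neg, mul_inv_cancel₀ (ne_of_lt hneg)] at this
      linarith
    have hTpos : 0 < T := by
      have hex : ∃ m ∈ s, w m ≠ 0 := by
        by_contra hcon
        push_neg at hcon
        have hwiz : w i = 0 := by
          have : c i * w i = 0 := by
            have : ∑ m ∈ s, c m * w m = 0 :=
              Finset.sum_eq_zero fun m hm => by rw [hcon m hm, mul_zero]
            rw [this] at hwi; linarith
          rcases mul_eq_zero.mp this with h' | h'
          · exfalso; simp only [hc] at h'; revert h'; split <;> norm_num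
          · exact h'
        have hallw : ∀ m, w m = 0 := by
          intro m
          by_cases hm : m = i
          · rw [hm]; exact hwiz
          · exact hcon m (Finset.mem_erase.mpr ⟨hm, mem_univ _⟩)
        exact hi0 (hws i0 ▸ hallw i0.succ)
      obtain ⟨m, hm, hwm⟩ := hex
      apply Finset.sum_pos'
      · intro n hn; exact mul_nonneg (le_of_lt (hgs n hn)) (sq_nonneg _)
      · exact ⟨m, hm, mul_pos (hgs m hm) (pow_two_pos_of_ne_zero hwm)⟩
    have hQ : (∑ j, γ j.succ * v j ^ 2) + γ 0 * (∑ j, v j) ^ 2 = γ i * w i ^ 2 + T := by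
      have : ∑ m, γ m * w m ^ 2 = γ i * w i ^ 2 + T := by
        rw [hT, hsdef]; exact (Finset.add_sum_erase Finset.univ (fun m => γ m * w m ^ 2) (mem_univ i)).symm
      rw [← this, Fin.sum_univ_succ]
      simp only [hw0, hws]
      ring
    rw [hQ]
    nlinarith [mul_le_mul_of_nonpos_left hCS (le_of_lt hneg),
      mul_pos hTpos (by linarith : (0:ℝ) < 1 + γ i * S)]

/-- With `γᵢ = rᵢ + sᵢ`, if either all `γ₀,…,γ_k ≥ 0` with at most one
zero, or some `γᵢ < 0`, all other `γⱼ > 0` and `1/γ₀ + ⋯ + 1/γ_k < 0`, then for every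
`y ∈ ℝ₊^k` the matrix with entries `(1/(yᵢyⱼ))·(∏ y_ℓ)·(δ_{ij}γⱼ + γ₀)` is positive
definite. -/
theorem gini_holder_gamma_matrix_posDef
    (k : ℕ) (hk : 2 ≤ k) (γ : Fin (k + 1) → ℝ)
    (h : ((∀ i, 0 ≤ γ i) ∧ ∀ i j, γ i = 0 → γ j = 0 → i = j) ∨
      ∃ i, γ i < 0 ∧ (∀ j, j ≠ i → 0 < γ j) ∧ ∑ j, (γ j)⁻¹ < 0)
    (y : Fin k → ℝ) (hy : ∀ i, 0 < y i) :
    (Matrix.of fun i j : Fin k =>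
        1 / (y i * y j) * (∏ ℓ, y ℓ) * ((if i = j then γ j.succ else 0) + γ 0)).PosDef := by
  have hP : 0 < ∏ ℓ, y ℓ := Finset.prod_pos fun i _ => hy i
  refine Matrix.PosDef.of_dotProduct_mulVec_pos ?_ ?_
  · show _ = _
    ext i j
    simp only [Matrix.conjTranspose_apply, Matrix.of_apply, star_trivial]
    by_cases hij : i = j
    · subst hij; rfl
    · simp only [if_neg hij, if_neg (Ne.symm hij)]
      rw [mul_comm (y j) (y i)]
  · intro x hx
    have hvne : (fun i => x i / y i) ≠ 0 := by
      obtain ⟨i, hi⟩ := Function.ne_iff.mp hx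
      simp only [Pi.zero_apply] at hi
      exact Function.ne_iff.mpr ⟨i, by
        simp only [Pi.zero_apply]
        exact div_ne_zero hi (ne_of_gt (hy i))⟩
    have key := key_pos k γ h (fun i => x i / y i) hvne
    have hform : dotProduct (star x) ((Matrix.of fun i j : Fin k =>
          1 / (y i * y j) * (∏ ℓ, y ℓ) * ((if i = j then γ j.succ else 0) + γ 0)).mulVec x)
        = (∏ ℓ, y ℓ) * ((∑ i, γ i.succ * (x i / y i) ^ 2) + γ 0 * (∑ i, x i / y i) ^ 2) := by
      simp only [star_trivial, dotProduct, Matrix.mulVec, Matrix.of_apply]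
      set P := ∏ ℓ, y ℓ with hPdef
      have expand : ∀ i : Fin k,
          x i * (∑ j, (1 / (y i * y j) * P * ((if i = j then γ j.succ else 0) + γ 0)) * x j)
          = P * (γ i.succ * (x i / y i) ^ 2)
            + P * γ 0 * ((x i / y i) * ∑ j, x j / y j) := by
        intro i
        rw [Finset.mul_sum, Finset.mul_sum]
        have step : ∀ j : Fin k,
            x i * ((1 / (y i * y j) * P * ((if i = j then γ j.succ else 0) + γ 0)) * x j)
            = (if i = j then P * (γ j.succ * (x j / y j) ^ 2) else 0)
              + P * γ 0 * ((x i / y i) * (x j / y j)) := by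
          intro j
          have hyi := ne_of_gt (hy i)
          have hyj := ne_of_gt (hy j)
          by_cases hij : i = j
          · subst hij
            simp only [if_pos rfl, if_true]
            field_simp
          · simp only [if_neg hij]
            field_simp
            ring
        rw [Finset.sum_congr rfl (fun j _ => step j), Finset.sum_add_distrib,
          Finset.sum_ite_eq, if_pos (Finset.mem_univ i), Finset.mul_sum]
      calc ∑ i, x i * ∑ j, (1 / (y i * y j) * P * ((if i = j then γ j.succ else 0) + γ 0)) * x j
          = ∑ i, (P * (γ i.succ * (x i / y i) ^ 2)
              + P * γ 0 * ((x i / y i) * ∑ j, x j / y j)) :=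
            Finset.sum_congr rfl fun i _ => expand i
        _ = (∑ i, P * (γ i.succ * (x i / y i) ^ 2))
              + ∑ i, P * γ 0 * ((x i / y i) * ∑ j, x j / y j) := Finset.sum_add_distrib
        _ = P * (∑ i, γ i.succ * (x i / y i) ^ 2)
              + P * γ 0 * ((∑ i, x i / y i) * ∑ j, x j / y j) := by
            rw [← Finset.mul_sum, ← Finset.mul_sum, ← Finset.sum_mul]
        _ = P * ((∑ i, γ i.succ * (x i / y i) ^ 2) + γ 0 * (∑ i, x i / y i) ^ 2) := by ring
    rw [hform]
    exact mul_pos hP key
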